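/- Let J be a B(H)-ideal and S ∈ J. Then (S) is J-soft (i.e., (S) = J(S)) if and only if J(S)J = (S) = ⟨S⟩_J = (S)_J = (S)_J^ℝ, in which case (S) = J(S) = J(S)J. -/

import Mathlib

open scoped BigOperators
open TopologicalSpace

variable {H : Type*} [NormedAddCommGroup H] [InnerProductSpace ℂ H] [CompleteSpace H]

set_option maxHeartbeats 1000000
set_option synthInstance.maxHeartbeats 400000
set_option linter.unusedSectionVars false

open scoped InnerProductSpace
open ContinuousLinearMap

/-- `J` is a two-sided ideal of `B(H)`: an additive subgroup closed under left and
right multiplication by arbitrary bounded operators. -/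
def IsBHIdeal (J : Set (H →L[ℂ] H)) : Prop :=
  (0 : H →L[ℂ] H) ∈ J ∧
  (∀ x ∈ J, ∀ y ∈ J, x + y ∈ J) ∧
  (∀ x ∈ J, -x ∈ J) ∧
  ∀ (A : H →L[ℂ] H), ∀ x ∈ J, A * x ∈ J ∧ x * A ∈ J

/-- `I` is a `J`-ideal: an additive subgroup of `B(H)` contained in `J` and closed
under left and right multiplication by elements of `J`. -/
def IsSubideal (J I : Set (H →L[ℂ] H)) : Prop :=
  I ⊆ J ∧ (0 : H →L[ℂ] H) ∈ I ∧
  (∀ x ∈ I, ∀ y ∈ I, x + y ∈ I) ∧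
  (∀ x ∈ I, -x ∈ I) ∧
  ∀ A ∈ J, ∀ x ∈ I, A * x ∈ I ∧ x * A ∈ I

/-- A linear `J`-ideal: a `J`-ideal closed under multiplication by complex scalars. -/
def IsLinearSubideal (J I : Set (H →L[ℂ] H)) : Prop :=
  IsSubideal J I ∧ ∀ (c : ℂ), ∀ x ∈ I, c • x ∈ I

/-- A real linear `J`-ideal: a `J`-ideal closed under multiplication by real scalars. -/
def IsRealSubideal (J I : Set (H →L[ℂ] H)) : Prop :=
  IsSubideal J I ∧ ∀ (r : ℝ), ∀ x ∈ I, r • x ∈ I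

/-- `(𝒮)`: the smallest two-sided ideal of `B(H)` containing `𝒮`. -/
def genBH (𝒮 : Set (H →L[ℂ] H)) : Set (H →L[ℂ] H) :=
  ⋂₀ {I | IsBHIdeal I ∧ 𝒮 ⊆ I}

/-- `⟨𝒮⟩_J`: the smallest `J`-ideal containing `𝒮`. -/
def genSub (J 𝒮 : Set (H →L[ℂ] H)) : Set (H →L[ℂ] H) :=
  ⋂₀ {I | IsSubideal J I ∧ 𝒮 ⊆ I}

/-- `(𝒮)_J`: the smallest linear `J`-ideal containing `𝒮`. -/
def genLin (J 𝒮 : Set (H →L[ℂ] H)) : Set (H →L[ℂ] H) :=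
  ⋂₀ {I | IsLinearSubideal J I ∧ 𝒮 ⊆ I}

/-- `(𝒮)_J^ℝ`: the smallest real linear `J`-ideal containing `𝒮`. -/
def genReal (J 𝒮 : Set (H →L[ℂ] H)) : Set (H →L[ℂ] H) :=
  ⋂₀ {I | IsRealSubideal J I ∧ 𝒮 ⊆ I}

/-- `J(𝒮)`: all finite sums `Σ Aᵢ Xᵢ` with `Aᵢ ∈ J` and `Xᵢ ∈ (𝒮)`. -/
def JGen (J 𝒮 : Set (H →L[ℂ] H)) : Set (H →L[ℂ] H) :=
  {T | ∃ (n : ℕ) (A X : Fin n → (H →L[ℂ] H)),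
    (∀ i, A i ∈ J ∧ X i ∈ genBH 𝒮) ∧ T = ∑ i, A i * X i}

/-- `J(𝒮)J`: all finite sums `Σ Aᵢ Xᵢ Bᵢ` with `Aᵢ, Bᵢ ∈ J` and `Xᵢ ∈ (𝒮)`. -/
def JGenJ (J 𝒮 : Set (H →L[ℂ] H)) : Set (H →L[ℂ] H) :=
  {T | ∃ (n : ℕ) (A X B : Fin n → (H →L[ℂ] H)),
    (∀ i, A i ∈ J ∧ X i ∈ genBH 𝒮 ∧ B i ∈ J) ∧ T = ∑ i, A i * X i * B i}

/-- `JS + SJ + J(S)J = {AS + SB + Y : A, B ∈ J, Y ∈ J(S)J}`. -/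
def JSplus (J : Set (H →L[ℂ] H)) (S : H →L[ℂ] H) : Set (H →L[ℂ] H) :=
  {T | ∃ A ∈ J, ∃ B ∈ J, ∃ Y ∈ JGenJ J {S}, T = A * S + S * B + Y}

/-- `K(H)`: the compact operators on `H`. -/
def KH : Set (H →L[ℂ] H) := {T | IsCompactOperator ⇑T}

/-- `T` is a finite-rank operator: its range is finite-dimensional. -/
def IsFiniteRank (T : H →L[ℂ] H) : Prop :=
  FiniteDimensional ℂ (LinearMap.range (T : H →ₗ[ℂ] H))



/- ### auxiliary lemmas -/

lemma sum_mem_of_closed {I : Set (H →L[ℂ] H)} (h0 : (0 : H →L[ℂ] H) ∈ I)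
    (hadd : ∀ x ∈ I, ∀ y ∈ I, x + y ∈ I) {n : ℕ} (f : Fin n → (H →L[ℂ] H))
    (hf : ∀ i, f i ∈ I) : ∑ i, f i ∈ I :=
  Finset.sum_induction f (· ∈ I) (fun a b ha hb => hadd a ha b hb) h0 (fun i _ => hf i)

/-- Finite sums of elements of `Q`. -/
def FS (Q : Set (H →L[ℂ] H)) : Set (H →L[ℂ] H) :=
  {T | ∃ (n : ℕ) (f : Fin n → (H →L[ℂ] H)), (∀ i, f i ∈ Q) ∧ T = ∑ i, f i}

lemma FS.zero_mem (Q : Set (H →L[ℂ] H)) : (0 : H →L[ℂ] H) ∈ FS Q :=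
  ⟨0, Fin.elim0, fun i => i.elim0, by simp⟩

lemma FS.mem {Q : Set (H →L[ℂ] H)} {x : H →L[ℂ] H} (h : x ∈ Q) : x ∈ FS Q :=
  ⟨1, fun _ => x, fun _ => h, by simp⟩

lemma FS.add_mem {Q : Set (H →L[ℂ] H)} {x y : H →L[ℂ] H}
    (hx : x ∈ FS Q) (hy : y ∈ FS Q) : x + y ∈ FS Q := by
  obtain ⟨n, f, hf, rfl⟩ := hx
  obtain ⟨m, g, hg, rfl⟩ := hy
  refine ⟨n + m, Fin.append f g, ?_, ?_⟩
  · intro i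
    refine Fin.addCases (fun j => ?_) (fun j => ?_) i
    · rw [Fin.append_left]; exact hf j
    · rw [Fin.append_right]; exact hg j
  · rw [Fin.sum_univ_add]
    simp [Fin.append_left, Fin.append_right]

lemma FS.neg_mem {Q : Set (H →L[ℂ] H)} (hQ : ∀ x ∈ Q, -x ∈ Q) {x : H →L[ℂ] H}
    (hx : x ∈ FS Q) : -x ∈ FS Q := by
  obtain ⟨n, f, hf, rfl⟩ := hx
  exact ⟨n, fun i => -(f i), fun i => hQ _ (hf i), by simp⟩

lemma FS.subset {Q I : Set (H →L[ℂ] H)} (hQI : Q ⊆ I) (h0 : (0 : H →L[ℂ] H) ∈ I)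
    (hadd : ∀ x ∈ I, ∀ y ∈ I, x + y ∈ I) : FS Q ⊆ I := by
  rintro x ⟨n, f, hf, rfl⟩
  exact sum_mem_of_closed h0 hadd f (fun i => hQI (hf i))

lemma FS.sum_mem {Q : Set (H →L[ℂ] H)} {n : ℕ} (f : Fin n → (H →L[ℂ] H))
    (hf : ∀ i, f i ∈ FS Q) : ∑ i, f i ∈ FS Q :=
  sum_mem_of_closed (FS.zero_mem Q) (fun _ hx _ hy => FS.add_mem hx hy) f hf

lemma FS.mul_left {Q : Set (H →L[ℂ] H)} (A : H →L[ℂ] H)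
    (hQ : ∀ x ∈ Q, A * x ∈ Q) {x : H →L[ℂ] H} (hx : x ∈ FS Q) : A * x ∈ FS Q := by
  obtain ⟨n, f, hf, rfl⟩ := hx
  exact ⟨n, fun i => A * f i, fun i => hQ _ (hf i), by rw [Finset.mul_sum]⟩

lemma FS.mul_right {Q : Set (H →L[ℂ] H)} (A : H →L[ℂ] H)
    (hQ : ∀ x ∈ Q, x * A ∈ Q) {x : H →L[ℂ] H} (hx : x ∈ FS Q) : x * A ∈ FS Q := by
  obtain ⟨n, f, hf, rfl⟩ := hx
  exact ⟨n, fun i => f i * A, fun i => hQ _ (hf i), by rw [Finset.sum_mul]⟩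

/- ### genBH basics -/

lemma isBHIdeal_genBH (𝒮 : Set (H →L[ℂ] H)) : IsBHIdeal (genBH 𝒮) := by
  refine ⟨?_, ?_, ?_, ?_⟩
  · exact fun I hI => hI.1.1
  · intro x hx y hy I hI
    exact hI.1.2.1 x (hx I hI) y (hy I hI)
  · intro x hx I hI
    exact hI.1.2.2.1 x (hx I hI)
  · intro A x hx
    constructor
    · intro I hI
      exact (hI.1.2.2.2 A x (hx I hI)).1
    · intro I hI
      exact (hI.1.2.2.2 A x (hx I hI)).2

lemma subset_genBH (𝒮 : Set (H →L[ℂ] H)) : 𝒮 ⊆ genBH 𝒮 :=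
  fun x hx I hI => hI.2 hx

lemma genBH_min {𝒮 I : Set (H →L[ℂ] H)} (hI : IsBHIdeal I) (h : 𝒮 ⊆ I) :
    genBH 𝒮 ⊆ I :=
  Set.sInter_subset_of_mem ⟨hI, h⟩

/-- generators of the principal ideal `(S)` -/
def QS (S : H →L[ℂ] H) : Set (H →L[ℂ] H) := {x | ∃ C D : H →L[ℂ] H, x = C * S * D}

lemma genBH_singleton (S : H →L[ℂ] H) : genBH {S} = FS (QS S) := by
  apply Set.Subset.antisymm
  · apply genBH_min
    · refine ⟨FS.zero_mem _, fun x hx y hy => FS.add_mem hx hy, ?_, ?_⟩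
      · intro x hx
        refine FS.neg_mem ?_ hx
        rintro y ⟨C, D, rfl⟩
        exact ⟨-C, D, by simp⟩
      · intro A x hx
        constructor
        · refine FS.mul_left A ?_ hx
          rintro y ⟨C, D, rfl⟩
          exact ⟨A * C, D, by noncomm_ring⟩
        · refine FS.mul_right A ?_ hx
          rintro y ⟨C, D, rfl⟩
          exact ⟨C, D * A, by noncomm_ring⟩
    · intro x hx
      rw [Set.mem_singleton_iff] at hx
      subst hx
      exact FS.mem ⟨1, 1, by simp⟩
  · have hBH := isBHIdeal_genBH ({S} : Set (H →L[ℂ] H))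
    refine FS.subset ?_ hBH.1 hBH.2.1
    rintro x ⟨C, D, rfl⟩
    have hS : S ∈ genBH {S} := subset_genBH _ rfl
    exact (hBH.2.2.2 D (C * S) (hBH.2.2.2 C S hS).1).2

lemma IsBHIdeal.smul_mem {I : Set (H →L[ℂ] H)} (hI : IsBHIdeal I) (c : ℂ)
    {x : H →L[ℂ] H} (hx : x ∈ I) : c • x ∈ I := by
  have : c • x = (c • (1 : H →L[ℂ] H)) * x := by rw [smul_mul_assoc, one_mul]
  rw [this]
  exact (hI.2.2.2 _ x hx).1

lemma real_smul_eq (r : ℝ) (x : H →L[ℂ] H) : r • x = (r : ℂ) • x := by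
  rw [← algebraMap_smul ℂ r x]
  norm_num

set_option linter.unusedSectionVars false

/- ### J itself is a (real/linear) subideal -/

variable {J : Set (H →L[ℂ] H)}

lemma IsBHIdeal.smul_real {I : Set (H →L[ℂ] H)} (hI : IsBHIdeal I) (r : ℝ)
    {x : H →L[ℂ] H} (hx : x ∈ I) : r • x ∈ I := by
  rw [real_smul_eq]
  exact hI.smul_mem _ hx

lemma isSubideal_self (hJ : IsBHIdeal J) : IsSubideal J J :=
  ⟨subset_rfl, hJ.1, hJ.2.1, hJ.2.2.1, fun A _ x hx => hJ.2.2.2 A x hx⟩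

lemma isLinearSubideal_self (hJ : IsBHIdeal J) : IsLinearSubideal J J :=
  ⟨isSubideal_self hJ, fun c x hx => hJ.smul_mem c hx⟩

lemma isRealSubideal_self (hJ : IsBHIdeal J) : IsRealSubideal J J :=
  ⟨isSubideal_self hJ, fun r x hx => hJ.smul_real r hx⟩

/- ### the generated subideals are subideals -/

lemma isSubideal_genSub (hJ : IsBHIdeal J) {S : H →L[ℂ] H} (hS : S ∈ J) :
    IsSubideal J (genSub J {S}) := by
  refine ⟨?_, ?_, ?_, ?_, ?_⟩
  · exact Set.sInter_subset_of_mem ⟨isSubideal_self hJ, Set.singleton_subset_iff.mpr hS⟩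
  · exact fun I hI => hI.1.2.1
  · intro x hx y hy I hI
    exact hI.1.2.2.1 x (hx I hI) y (hy I hI)
  · intro x hx I hI
    exact hI.1.2.2.2.1 x (hx I hI)
  · intro A hA x hx
    constructor
    · intro I hI
      exact (hI.1.2.2.2.2 A hA x (hx I hI)).1
    · intro I hI
      exact (hI.1.2.2.2.2 A hA x (hx I hI)).2

lemma mem_genSub (S : H →L[ℂ] H) : S ∈ genSub J {S} :=
  fun I hI => hI.2 rfl

lemma genSub_min {S : H →L[ℂ] H} {I : Set (H →L[ℂ] H)} (hI : IsSubideal J I)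
    (h : S ∈ I) : genSub J {S} ⊆ I :=
  Set.sInter_subset_of_mem ⟨hI, Set.singleton_subset_iff.mpr h⟩

lemma isRealSubideal_genReal (hJ : IsBHIdeal J) {S : H →L[ℂ] H} (hS : S ∈ J) :
    IsRealSubideal J (genReal J {S}) := by
  refine ⟨⟨?_, ?_, ?_, ?_, ?_⟩, ?_⟩
  · exact Set.sInter_subset_of_mem ⟨isRealSubideal_self hJ, Set.singleton_subset_iff.mpr hS⟩
  · exact fun I hI => hI.1.1.2.1
  · intro x hx y hy I hI
    exact hI.1.1.2.2.1 x (hx I hI) y (hy I hI)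
  · intro x hx I hI
    exact hI.1.1.2.2.2.1 x (hx I hI)
  · intro A hA x hx
    constructor
    · intro I hI
      exact (hI.1.1.2.2.2.2 A hA x (hx I hI)).1
    · intro I hI
      exact (hI.1.1.2.2.2.2 A hA x (hx I hI)).2
  · intro r x hx I hI
    exact hI.1.2 r x (hx I hI)

lemma mem_genReal (S : H →L[ℂ] H) : S ∈ genReal J {S} :=
  fun I hI => hI.2 rfl

lemma genReal_min {S : H →L[ℂ] H} {I : Set (H →L[ℂ] H)} (hI : IsRealSubideal J I)
    (h : S ∈ I) : genReal J {S} ⊆ I :=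
  Set.sInter_subset_of_mem ⟨hI, Set.singleton_subset_iff.mpr h⟩

lemma isLinearSubideal_genLin (hJ : IsBHIdeal J) {S : H →L[ℂ] H} (hS : S ∈ J) :
    IsLinearSubideal J (genLin J {S}) := by
  refine ⟨⟨?_, ?_, ?_, ?_, ?_⟩, ?_⟩
  · exact Set.sInter_subset_of_mem ⟨isLinearSubideal_self hJ, Set.singleton_subset_iff.mpr hS⟩
  · exact fun I hI => hI.1.1.2.1
  · intro x hx y hy I hI
    exact hI.1.1.2.2.1 x (hx I hI) y (hy I hI)
  · intro x hx I hI
    exact hI.1.1.2.2.2.1 x (hx I hI)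
  · intro A hA x hx
    constructor
    · intro I hI
      exact (hI.1.1.2.2.2.2 A hA x (hx I hI)).1
    · intro I hI
      exact (hI.1.1.2.2.2.2 A hA x (hx I hI)).2
  · intro c x hx I hI
    exact hI.1.2 c x (hx I hI)

lemma mem_genLin (S : H →L[ℂ] H) : S ∈ genLin J {S} :=
  fun I hI => hI.2 rfl

lemma genLin_min {S : H →L[ℂ] H} {I : Set (H →L[ℂ] H)} (hI : IsLinearSubideal J I)
    (h : S ∈ I) : genLin J {S} ⊆ I :=
  Set.sInter_subset_of_mem ⟨hI, Set.singleton_subset_iff.mpr h⟩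

/- ### the chain of inclusions -/

lemma genSub_subset_genReal (hJ : IsBHIdeal J) {S : H →L[ℂ] H} (hS : S ∈ J) :
    genSub J {S} ⊆ genReal J {S} :=
  genSub_min (isRealSubideal_genReal hJ hS).1 (mem_genReal S)

lemma genReal_subset_genLin (hJ : IsBHIdeal J) {S : H →L[ℂ] H} (hS : S ∈ J) :
    genReal J {S} ⊆ genLin J {S} := by
  refine genReal_min ⟨(isLinearSubideal_genLin hJ hS).1, ?_⟩ (mem_genLin S)
  intro r x hx
  rw [real_smul_eq]
  exact (isLinearSubideal_genLin hJ hS).2 _ x hx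

lemma genLin_subset_genBH (hJ : IsBHIdeal J) {S : H →L[ℂ] H} (hS : S ∈ J) :
    genLin J {S} ⊆ genBH {S} := by
  have hP := isBHIdeal_genBH ({S} : Set (H →L[ℂ] H))
  have hSP : S ∈ genBH {S} := subset_genBH _ rfl
  have hlin : IsLinearSubideal J (genBH {S} ∩ J) := by
    refine ⟨⟨Set.inter_subset_right, ⟨hP.1, hJ.1⟩, ?_, ?_, ?_⟩, ?_⟩
    · intro x hx y hy
      exact ⟨hP.2.1 x hx.1 y hy.1, hJ.2.1 x hx.2 y hy.2⟩
    · intro x hx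
      exact ⟨hP.2.2.1 x hx.1, hJ.2.2.1 x hx.2⟩
    · intro A hA x hx
      exact ⟨⟨(hP.2.2.2 A x hx.1).1, (hJ.2.2.2 A x hx.2).1⟩,
        ⟨(hP.2.2.2 A x hx.1).2, (hJ.2.2.2 A x hx.2).2⟩⟩
    · intro c x hx
      exact ⟨hP.smul_mem c hx.1, hJ.smul_mem c hx.2⟩
  exact (genLin_min hlin ⟨hSP, hS⟩).trans Set.inter_subset_left

/- ### inclusions of JGen and JGenJ -/

lemma JGen_subset_genBH {S : H →L[ℂ] H} : JGen J {S} ⊆ genBH {S} := by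
  have hP := isBHIdeal_genBH ({S} : Set (H →L[ℂ] H))
  rintro T ⟨n, A, X, h, rfl⟩
  exact sum_mem_of_closed hP.1 hP.2.1 _ (fun i => (hP.2.2.2 (A i) _ (h i).2).1)

lemma JGenJ_subset_genBH {S : H →L[ℂ] H} : JGenJ J {S} ⊆ genBH {S} := by
  have hP := isBHIdeal_genBH ({S} : Set (H →L[ℂ] H))
  rintro T ⟨n, A, X, B, h, rfl⟩
  refine sum_mem_of_closed hP.1 hP.2.1 _ (fun i => ?_)
  exact (hP.2.2.2 (B i) _ (hP.2.2.2 (A i) _ (h i).2.1).1).2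

lemma JGenJ_subset_JGen {S : H →L[ℂ] H} : JGenJ J {S} ⊆ JGen J {S} := by
  have hP := isBHIdeal_genBH ({S} : Set (H →L[ℂ] H))
  rintro T ⟨n, A, X, B, h, rfl⟩
  refine ⟨n, A, fun i => X i * B i, fun i => ⟨(h i).1, (hP.2.2.2 (B i) _ (h i).2.1).2⟩, ?_⟩
  refine Finset.sum_congr rfl (fun i _ => ?_)
  rw [mul_assoc]

lemma JGenJ_subset_genSub (hJ : IsBHIdeal J) {S : H →L[ℂ] H} (hS : S ∈ J) :
    JGenJ J {S} ⊆ genSub J {S} := by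
  have hsub := isSubideal_genSub hJ hS
  have hSmem := mem_genSub (J := J) S
  rintro T ⟨n, A, X, B, h, rfl⟩
  refine sum_mem_of_closed hsub.2.1 hsub.2.2.1 _ (fun i => ?_)
  obtain ⟨hA, hX, hB⟩ := h i
  rw [genBH_singleton] at hX
  obtain ⟨m, f, hf, hXeq⟩ := hX
  have : A i * X i * B i = ∑ j, A i * f j * B i := by
    rw [hXeq, Finset.mul_sum, Finset.sum_mul]
  rw [this]
  refine sum_mem_of_closed hsub.2.1 hsub.2.2.1 _ (fun j => ?_)
  obtain ⟨C, D, hfj⟩ := hf j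
  rw [hfj]
  have hregroup : A i * (C * S * D) * B i = (A i * C) * (S * (D * B i)) := by
    noncomm_ring
  rw [hregroup]
  have hAC : A i * C ∈ J := (hJ.2.2.2 C (A i) hA).2
  have hDB : D * B i ∈ J := (hJ.2.2.2 D (B i) hB).1
  exact (hsub.2.2.2.2 _ hAC _ (hsub.2.2.2.2 _ hDB S hSmem).2).1

/-- Key analytic lemma: for every bounded operator `T`, there is `U` with
`star T = star U * (T * star U)`. -/
theorem exists_star_eq (T : H →L[ℂ] H) :
    ∃ U : H →L[ℂ] H, star T = star U * (T * star U) := by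
  classical
  set R : H →L[ℂ] H := CFC.sqrt (star T * T) with hRdef
  have hRnn : (0 : H →L[ℂ] H) ≤ R := CFC.sqrt_nonneg _
  have hRsa : IsSelfAdjoint R := hRnn.isSelfAdjoint
  have hR2 : R * R = star T * T := CFC.sqrt_mul_sqrt_self _ (star_mul_self_nonneg T)
  -- inner products agree
  have key : ∀ x y : H, ⟪R x, R y⟫_ℂ = ⟪T x, T y⟫_ℂ := by
    intro x y
    have h1 := ContinuousLinearMap.adjoint_inner_left R (R y) x
    rw [hRsa.adjoint_eq] at h1
    have h2 : R (R y) = (star T * T) y := by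
      rw [← ContinuousLinearMap.mul_apply, hR2]
    have h3 : (star T * T) y = ContinuousLinearMap.adjoint T (T y) := rfl
    rw [h1, h2, h3, ContinuousLinearMap.adjoint_inner_right]
  have hnorm : ∀ x : H, ‖R x‖ = ‖T x‖ := by
    intro x
    rw [@norm_eq_sqrt_re_inner ℂ, @norm_eq_sqrt_re_inner ℂ, key x x]
  have hwd : ∀ a b : H, R a = R b → T a = T b := by
    intro a b hab
    have : ‖T a - T b‖ = 0 := by
      rw [← map_sub, ← hnorm, map_sub, hab, sub_self, norm_zero]
    rwa [norm_sub_eq_zero_iff] at this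
  -- the range of R and its closure
  set M₀ : Submodule ℂ H := LinearMap.range (R : H →ₗ[ℂ] H) with hM₀
  have hmem : ∀ x : H, R x ∈ M₀ := fun x => LinearMap.mem_range_self _ x
  set preim : M₀ → H := fun m => m.2.choose with hpreim
  have hpre : ∀ m : M₀, R (preim m) = (m : H) := fun m => m.2.choose_spec
  -- the isometry φ : M₀ → H, R x ↦ T x
  set φ₀ : M₀ →ₗ[ℂ] H :=
    { toFun := fun m => T (preim m)
      map_add' := by
        intro m m'
        have : R (preim (m + m')) = R (preim m + preim m') := by
          rw [map_add, hpre, hpre, hpre, Submodule.coe_add]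
        simpa using hwd _ _ this
      map_smul' := by
        intro c m
        have : R (preim (c • m)) = R (c • preim m) := by
          rw [map_smul, hpre, hpre, Submodule.coe_smul]
        simpa using hwd _ _ this } with hφ₀def
  have hφ₀ : ∀ x : H, φ₀ ⟨R x, hmem x⟩ = T x := by
    intro x
    exact hwd _ _ (hpre ⟨R x, hmem x⟩)
  have hφ₀norm : ∀ m : M₀, ‖φ₀ m‖ = ‖m‖ := by
    intro m
    show ‖T (preim m)‖ = ‖m‖
    rw [← hnorm, hpre]
    rfl
  set φ : M₀ →ₗᵢ[ℂ] H := ⟨φ₀, hφ₀norm⟩ with hφdef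
  -- the closure of the range
  set Mc : Submodule ℂ H := M₀.topologicalClosure with hMc
  haveI : CompleteSpace Mc := (Submodule.isClosed_topologicalClosure M₀).completeSpace_coe
  -- the inclusion M₀ → Mc
  set eli : M₀ →ₗᵢ[ℂ] Mc :=
    ⟨Submodule.inclusion M₀.le_topologicalClosure, fun _ => rfl⟩ with heli
  set e : M₀ →L[ℂ] Mc := eli.toContinuousLinearMap with he
  have h_ui : IsUniformInducing e := eli.isometry.isUniformInducing
  have h_dense : DenseRange e := by
    intro m
    rw [closure_subtype]
    have himg : ((↑) : Mc → H) '' Set.range e = (M₀ : Set H) := by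
      ext z
      constructor
      · rintro ⟨w, ⟨a, rfl⟩, rfl⟩
        exact a.2
      · intro hz
        exact ⟨e ⟨z, hz⟩, ⟨⟨z, hz⟩, rfl⟩, rfl⟩
    rw [himg, ← Submodule.topologicalClosure_coe]
    exact m.2
  set U₀ : Mc →L[ℂ] H := φ.toContinuousLinearMap.extend e with hU₀
  have hU₀e : ∀ m : M₀, U₀ (e m) = φ m := fun m =>
    ContinuousLinearMap.extend_eq _ h_dense h_ui m
  have hU₀norm : ∀ m : Mc, ‖U₀ m‖ = ‖m‖ := by
    intro m
    refine h_dense.induction_on m ?_ ?_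
    · exact isClosed_eq (continuous_norm.comp U₀.continuous) continuous_norm
    · intro a
      rw [hU₀e a, φ.norm_map]
      exact congrArg _ rfl
  set U₀LI : Mc →ₗᵢ[ℂ] H := ⟨U₀.toLinearMap, hU₀norm⟩ with hU₀LI
  have hU₀inner : ∀ a b : Mc, ⟪U₀ a, U₀ b⟫_ℂ = ⟪(a : H), (b : H)⟫_ℂ := by
    intro a b
    exact U₀LI.inner_map_map a b
  set U : H →L[ℂ] H := U₀.comp (Mc.orthogonalProjection) with hU
  -- U (R x) = T x
  have hUR : ∀ x : H, U (R x) = T x := by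
    intro x
    have h1 : Mc.orthogonalProjection (R x) =
        ⟨R x, M₀.le_topologicalClosure (hmem x)⟩ :=
      Submodule.orthogonalProjection_mem_subspace_eq_self (⟨R x, M₀.le_topologicalClosure (hmem x)⟩ : Mc)
    show U₀ (Mc.orthogonalProjection (R x)) = T x
    rw [h1]
    have h2 : (⟨R x, M₀.le_topologicalClosure (hmem x)⟩ : Mc) = e ⟨R x, hmem x⟩ := rfl
    rw [h2, hU₀e]
    exact hφ₀ x
  have hTUR : T = U * R := by
    ext x
    exact (hUR x).symm
  -- star U * T = R
  have hUT : star U * T = R := by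
    ext x
    refine ext_inner_left ℂ (fun v => ?_)
    have hstep1 : ⟪v, (star U * T) x⟫_ℂ = ⟪U v, T x⟫_ℂ := by
      have : (star U * T) x = ContinuousLinearMap.adjoint U (T x) := rfl
      rw [this, ContinuousLinearMap.adjoint_inner_right]
    rw [hstep1, ← hUR x]
    have hPRx : Mc.orthogonalProjection (R x) =
        ⟨R x, M₀.le_topologicalClosure (hmem x)⟩ :=
      Submodule.orthogonalProjection_mem_subspace_eq_self (⟨R x, M₀.le_topologicalClosure (hmem x)⟩ : Mc)
    have hUv : U v = U₀ (Mc.orthogonalProjection v) := rfl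
    have hURx : U (R x) = U₀ (Mc.orthogonalProjection (R x)) := rfl
    rw [hUv, hURx, hU₀inner, hPRx]
    have hsub : v - ↑(Mc.orthogonalProjection v) ∈ Mcᗮ :=
      Submodule.sub_starProjection_mem_orthogonal v
    have hz : ⟪v - ↑(Mc.orthogonalProjection v), R x⟫_ℂ = 0 :=
      Submodule.inner_left_of_mem_orthogonal (M₀.le_topologicalClosure (hmem x)) hsub
    rw [inner_sub_left] at hz
    exact (sub_eq_zero.mp hz).symm
  refine ⟨U, ?_⟩
  calc star T = star (U * R) := by rw [← hTUR]
    _ = star R * star U := by rw [star_mul]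
    _ = R * star U := by rw [hRsa.star_eq]
    _ = (star U * T) * star U := by rw [hUT]
    _ = star U * (T * star U) := by rw [mul_assoc]


lemma IsBHIdeal.star_mem {I : Set (H →L[ℂ] H)} (hI : IsBHIdeal I) {T : H →L[ℂ] H}
    (hT : T ∈ I) : star T ∈ I := by
  obtain ⟨U, hU⟩ := exists_star_eq T
  rw [hU]
  exact (hI.2.2.2 (star U) _ (hI.2.2.2 (star U) T hT).2).1

/- ### the hard direction: softness implies two-sided softness -/

lemma soft_subset_JGenJ (hJ : IsBHIdeal J) {S : H →L[ℂ] H}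
    (h : genBH {S} = JGen J {S}) : genBH {S} ⊆ JGenJ J {S} := by
  classical
  have hP := isBHIdeal_genBH ({S} : Set (H →L[ℂ] H))
  intro T hT
  -- star T lies in (S) = J(S)
  have hTstar : star T ∈ JGen J {S} := by
    rw [← h]
    exact hP.star_mem hT
  obtain ⟨n, A, X, hAX, hstar⟩ := hTstar
  have hT' : T = ∑ i, star (X i) * star (A i) := by
    have := congrArg star hstar
    rw [star_star, star_sum] at this
    simpa [star_mul] using this
  rw [hT']
  -- it suffices that each summand lies in JGenJ
  have hMzero : (0 : H →L[ℂ] H) ∈ JGenJ J {S} :=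
    ⟨0, Fin.elim0, Fin.elim0, Fin.elim0, fun i => i.elim0, by simp⟩
  have hMadd : ∀ x ∈ JGenJ J {S}, ∀ y ∈ JGenJ J {S}, x + y ∈ JGenJ J {S} := by
    rintro x ⟨nx, Ax, Xx, Bx, hx, rfl⟩ y ⟨ny, Ay, Xy, By, hy, rfl⟩
    refine ⟨nx + ny, Fin.append Ax Ay, Fin.append Xx Xy, Fin.append Bx By, ?_, ?_⟩
    · intro i
      refine Fin.addCases (fun j => ?_) (fun j => ?_) i
      · simp only [Fin.append_left]; exact hx j
      · simp only [Fin.append_right]; exact hy j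
    · rw [Fin.sum_univ_add]
      simp [Fin.append_left, Fin.append_right]
  refine sum_mem_of_closed hMzero hMadd _ (fun i => ?_)
  -- star (X i) ∈ (S) = J(S), star (A i) ∈ J
  have hXi : star (X i) ∈ JGen J {S} := by
    rw [← h]
    exact hP.star_mem (hAX i).2
  obtain ⟨m, A', X', hA'X', hX'⟩ := hXi
  have hAi : star (A i) ∈ J := hJ.star_mem (hAX i).1
  have : star (X i) * star (A i) = ∑ j, A' j * X' j * star (A i) := by
    rw [hX', Finset.sum_mul]
  rw [this]
  exact ⟨m, A', X', fun _ => star (A i), fun j => ⟨(hA'X' j).1, (hA'X' j).2, hAi⟩, rfl⟩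


/-- `(S)` is `J`-soft iff `J(S)J = (S) = ⟨S⟩_J = (S)_J = (S)_J^ℝ`,
in which case `(S) = J(S) = J(S)J`. -/
theorem stmt_5 (J : Set (H →L[ℂ] H)) (hJ : IsBHIdeal J)
    (S : H →L[ℂ] H) (hS : S ∈ J) :
    ((genBH {S} = JGen J {S}) ↔
      (JGenJ J {S} = genBH {S} ∧ genBH {S} = genSub J {S} ∧
       genSub J {S} = genLin J {S} ∧ genLin J {S} = genReal J {S})) ∧
    (genBH {S} = JGen J {S} → genBH {S} = JGenJ J {S}) := by
  have c1 : genSub J {S} ⊆ genReal J {S} := genSub_subset_genReal hJ hS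
  have c2 : genReal J {S} ⊆ genLin J {S} := genReal_subset_genLin hJ hS
  have c3 : genLin J {S} ⊆ genBH {S} := genLin_subset_genBH hJ hS
  have c4 : JGenJ J {S} ⊆ genSub J {S} := JGenJ_subset_genSub hJ hS
  have c5 : JGenJ J {S} ⊆ genBH {S} := JGenJ_subset_genBH
  have c6 : JGen J {S} ⊆ genBH {S} := JGen_subset_genBH
  have hard : genBH {S} = JGen J {S} → genBH {S} ⊆ JGenJ J {S} := soft_subset_JGenJ hJ
  constructor
  · constructor
    · intro hsoft
      have hPM : genBH {S} ⊆ JGenJ J {S} := hard hsoft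
      refine ⟨Set.Subset.antisymm c5 hPM, ?_, ?_, ?_⟩
      · exact Set.Subset.antisymm (hPM.trans c4) ((c1.trans c2).trans c3)
      · exact Set.Subset.antisymm (c1.trans c2) (c3.trans (hPM.trans c4))
      · exact Set.Subset.antisymm ((c3.trans hPM).trans (c4.trans c1)) c2
    · rintro ⟨h1, -, -, -⟩
      refine Set.Subset.antisymm ?_ c6
      intro x hx
      rw [← h1] at hx
      exact JGenJ_subset_JGen hx
  · intro hsoft
    exact Set.Subset.antisymm (hard hsoft) c5
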